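/- arXiv:2110.14912 — 2 statements merged into one kernel-verified Lean document; each statement's English description precedes it below -/
import Mathlib

section
/- There exists a constant C > 0 such that for every Schwartz function v : ℝ² → ℂ one has ∫_{ℝ²} ⟨x⟩² |∇v(x)|² dx ≤ C ( ‖Δ v‖²_{L²} + ‖⟨x⟩² v‖²_{L²} ). -/
open MeasureTheory Complex

noncomputable section

abbrev E2 : Type := EuclideanSpace ℝ (Fin 2)

/-- Partial derivative in the `i`-th coordinate direction. -/
noncomputable def pd (i : Fin 2) (f : E2 → ℂ) : E2 → ℂ :=
  fun x => fderiv ℝ f x (EuclideanSpace.single i 1)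

/-- The Laplacian on `ℝ²`. -/
noncomputable def lap (f : E2 → ℂ) : E2 → ℂ :=
  fun x => ∑ i : Fin 2, pd i (pd i f) x

/-- The harmonic oscillator `A f = -Δ f + |x|² f`. -/
noncomputable def Aop (f : E2 → ℂ) : E2 → ℂ :=
  fun x => -lap f x + (‖x‖ : ℂ)^2 * f x

/-- Time derivative of a time-dependent function. -/
noncomputable def tderiv (F : ℝ → E2 → ℂ) : ℝ → E2 → ℂ :=
  fun t x => deriv (fun s => F s x) t

/-- Squared euclidean norm of the gradient, `|∇f|²(x)`. -/
noncomputable def gradSq (f : E2 → ℂ) (x : E2) : ℝ := ∑ i : Fin 2, ‖pd i f x‖^2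

/-- The `L²` norm. -/
noncomputable def L2norm (f : E2 → ℂ) : ℝ := Real.sqrt (∫ x : E2, ‖f x‖^2)

/-- The `ℋ¹` norm: `(‖∇φ‖² + ‖|x|φ‖²)^(1/2)`. -/
noncomputable def H1norm (f : E2 → ℂ) : ℝ :=
  Real.sqrt ((∫ x : E2, gradSq f x) + ∫ x : E2, ‖x‖^2 * ‖f x‖^2)

/-- A Schwartz-regular solution of the cubic NLS with harmonic potential,
`i ∂ₜ u - Δu + |x|² u + σ u |u|² = 0`. -/
def IsSolution (σ : ℝ) (u : ℝ → SchwartzMap E2 ℂ) : Prop :=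
  ContDiff ℝ (⊤ : ℕ∞) (fun p : ℝ × E2 => u p.1 p.2) ∧
  ∀ (t : ℝ) (x : E2), Complex.I * deriv (fun s => u s x) t - lap (fun y => u t y) x
    + (‖x‖ : ℂ)^2 * u t x + (σ : ℂ) * u t x * (‖u t x‖ : ℂ)^2 = 0

/-- A Schwartz-regular solution of the linear Schrödinger equation with harmonic
potential, `i ∂ₜ w - Δw + |x|² w = 0`. -/
def IsLinSolution (w : ℝ → SchwartzMap E2 ℂ) : Prop :=
  ContDiff ℝ (⊤ : ℕ∞) (fun p : ℝ × E2 => w p.1 p.2) ∧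
  ∀ (t : ℝ) (x : E2), Complex.I * deriv (fun s => w s x) t - lap (fun y => w t y) x
    + (‖x‖ : ℂ)^2 * w t x = 0

/-- Partial derivative for real-valued functions. -/
noncomputable def pdR (i : Fin 2) (f : E2 → ℝ) : E2 → ℝ :=
  fun x => fderiv ℝ f x (EuclideanSpace.single i 1)

/-- The Laplacian for real-valued functions. -/
noncomputable def lapR (f : E2 → ℝ) : E2 → ℝ :=
  fun x => ∑ i : Fin 2, pdR i (pdR i f) x

noncomputable def pdS (i : Fin 2) (f : SchwartzMap E2 ℂ) : SchwartzMap E2 ℂ :=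
  LineDeriv.lineDerivOpCLM ℝ (SchwartzMap E2 ℂ) (EuclideanSpace.single i (1:ℝ)) f

lemma pdS_apply (i : Fin 2) (f : SchwartzMap E2 ℂ) (x : E2) :
    pdS i f x = fderiv ℝ f x (EuclideanSpace.single i 1) := by
  simp [pdS, LineDeriv.lineDerivOpCLM_apply, SchwartzMap.lineDerivOp_apply_eq_fderiv]

lemma pow_one_add_le (k : ℕ) {a : ℝ} (ha : 0 ≤ a) :
    (1 + a)^k ≤ 2^k * (1 + a^k) := by
  have h1 : (1 + a) ≤ 2 * max 1 a := by
    rcases le_total a 1 with h | h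
    · simp [max_eq_left h]; linarith
    · simp [max_eq_right h]; linarith
  calc (1+a)^k ≤ (2 * max 1 a)^k := by
        apply pow_le_pow_left₀ (by linarith) h1
    _ = 2^k * (max 1 a)^k := by rw [mul_pow]
    _ ≤ 2^k * (1 + a^k) := by
        apply mul_le_mul_of_nonneg_left _ (by positivity)
        rcases le_total a 1 with h | h
        · rcases le_total ((max 1 a)^k) 1 with h2 | h2
          · nlinarith [pow_nonneg ha k]
          · simp [max_eq_left h] at h2 ⊢; nlinarith [pow_nonneg ha k]
        · simp [max_eq_right h]

lemma integrable_weight_mul (f g : SchwartzMap E2 ℂ) (k : ℕ) :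
    Integrable (fun x : E2 => (1+‖x‖^2)^k * (‖f x‖ * ‖g x‖)) := by
  obtain ⟨Cg, hCg⟩ := g.decay' 0 0
  have hCg' : ∀ x, ‖g x‖ ≤ Cg := by
    intro x; have := hCg x; simp at this; exact this
  have hCg0 : 0 ≤ Cg := le_trans (norm_nonneg _) (hCg' 0)
  have h1 : Integrable (fun x : E2 => ‖x‖^(2*k) * ‖f x‖) := f.integrable_pow_mul volume (2*k)
  have h0 : Integrable (fun x : E2 => ‖f x‖) := f.integrable.norm
  have hmaj : Integrable (fun x : E2 =>
      (2^k * Cg) * (‖f x‖ + ‖x‖^(2*k) * ‖f x‖)) := ((h0.add h1).const_mul _)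
  apply hmaj.mono' ?_ (ae_of_all _ ?_)
  · apply Continuous.aestronglyMeasurable
    fun_prop
  · intro x
    have hb := pow_one_add_le k (a := ‖x‖^2) (by positivity)
    have : (‖x‖^2)^k = ‖x‖^(2*k) := by rw [← pow_mul, mul_comm]
    rw [this] at hb
    have hnn : (0:ℝ) ≤ (1+‖x‖^2)^k * (‖f x‖ * ‖g x‖) := by positivity
    rw [Real.norm_of_nonneg hnn]
    calc (1+‖x‖^2)^k * (‖f x‖ * ‖g x‖)
        ≤ (1+‖x‖^2)^k * (‖f x‖ * Cg) := by
          apply mul_le_mul_of_nonneg_left _ (by positivity)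
          exact mul_le_mul_of_nonneg_left (hCg' x) (norm_nonneg _)
      _ ≤ (2^k * (1 + ‖x‖^(2*k))) * (‖f x‖ * Cg) := by
          apply mul_le_mul_of_nonneg_right hb (by positivity)
      _ = (2^k * Cg) * (‖f x‖ + ‖x‖^(2*k) * ‖f x‖) := by ring

lemma integrable_dom {Y : Type*} [NormedAddCommGroup Y] {φ : E2 → Y} (hφ : Continuous φ)
    (f g : SchwartzMap E2 ℂ) (k : ℕ) (C : ℝ)
    (h : ∀ x, ‖φ x‖ ≤ C * ((1+‖x‖^2)^k * (‖f x‖ * ‖g x‖))) : Integrable φ :=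
  ((integrable_weight_mul f g k).const_mul C).mono' hφ.aestronglyMeasurable (ae_of_all _ h)

lemma norm_sq_eq (x : E2) : ‖x‖^2 = ∑ j, (x j)^2 := by
  rw [EuclideanSpace.norm_eq, Real.sq_sqrt (by positivity)]
  simp [sq_abs]

lemma abs_coord_le (x : E2) (i : Fin 2) : |x i| ≤ ‖x‖ := by
  have h2 : (x i)^2 ≤ ‖x‖^2 := by
    rw [norm_sq_eq]
    exact Finset.single_le_sum (f := fun j => (x j)^2) (fun j _ => sq_nonneg _) (Finset.mem_univ i)
  have := Real.sqrt_le_sqrt h2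
  simpa [Real.sqrt_sq_eq_abs, Real.sqrt_sq (norm_nonneg x)] using this

lemma integrable_Z (v : SchwartzMap E2 ℂ) (i : Fin 2) :
    Integrable (fun x : E2 => (((1 + ‖x‖^2 : ℝ) : ℂ) * (starRingEnd ℂ) (pdS i (pdS i v) x)
        + 2 * ((x i : ℝ) : ℂ) * (starRingEnd ℂ) (pdS i v x)) * v x) := by
  set G := pdS i v with hG
  set H := pdS i G with hH
  have hxle : ∀ x : E2, 2*|x i| ≤ 1 + ‖x‖^2 := by
    intro x
    have := abs_coord_le x i
    nlinarith [abs_nonneg (x i), norm_nonneg x, sq_nonneg (1 - ‖x‖)]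
  have hcW : Continuous (fun x : E2 => ((1 + ‖x‖^2 : ℝ) : ℂ)) := by fun_prop
  have hcG : Continuous (fun x : E2 => (starRingEnd ℂ) (G x)) :=
    Complex.continuous_conj.comp G.continuous
  have hcH : Continuous (fun x : E2 => (starRingEnd ℂ) (H x)) :=
    Complex.continuous_conj.comp H.continuous
  have hcxi : Continuous (fun x : E2 => ((x i : ℝ) : ℂ)) :=
    Complex.continuous_ofReal.comp (EuclideanSpace.proj (𝕜 := ℝ) i).continuous
  have hA : Integrable (fun x : E2 =>
      (1+‖x‖^2)^1 * (‖H x‖ * ‖v x‖) + (1+‖x‖^2)^1 * (‖G x‖ * ‖v x‖)) :=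
    (integrable_weight_mul H v 1).add (integrable_weight_mul G v 1)
  apply hA.mono' ?_ (ae_of_all _ ?_)
  · exact (((hcW.mul hcH).add ((continuous_const.mul hcxi).mul hcG)).mul v.continuous).aestronglyMeasurable
  · intro x
    have hb1 : ‖((1 + ‖x‖^2 : ℝ) : ℂ) * (starRingEnd ℂ) (H x)‖ = (1+‖x‖^2) * ‖H x‖ := by
      rw [norm_mul, Complex.norm_real, RCLike.norm_conj]
      rw [Real.norm_of_nonneg (by positivity)]
    have hb2 : ‖2 * ((x i : ℝ) : ℂ) * (starRingEnd ℂ) (G x)‖ ≤ (1+‖x‖^2) * ‖G x‖ := by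
      have h2 : ‖(2:ℂ)‖ = 2 := by norm_num
      rw [norm_mul, norm_mul, Complex.norm_real, RCLike.norm_conj, h2, Real.norm_eq_abs]
      nlinarith [hxle x, norm_nonneg (G x), abs_nonneg (x i)]
    calc ‖(((1 + ‖x‖^2 : ℝ) : ℂ) * (starRingEnd ℂ) (H x)
          + 2 * ((x i : ℝ) : ℂ) * (starRingEnd ℂ) (G x)) * v x‖
        ≤ (‖((1 + ‖x‖^2 : ℝ) : ℂ) * (starRingEnd ℂ) (H x)‖
          + ‖2 * ((x i : ℝ) : ℂ) * (starRingEnd ℂ) (G x)‖) * ‖v x‖ := by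
          rw [norm_mul]
          exact mul_le_mul_of_nonneg_right (norm_add_le _ _) (norm_nonneg _)
      _ ≤ ((1+‖x‖^2) * ‖H x‖ + (1+‖x‖^2) * ‖G x‖) * ‖v x‖ := by
          apply mul_le_mul_of_nonneg_right _ (norm_nonneg _)
          rw [hb1]; exact add_le_add le_rfl hb2
      _ = (1+‖x‖^2)^1 * (‖H x‖ * ‖v x‖) + (1+‖x‖^2)^1 * (‖G x‖ * ‖v x‖) := by ring

lemma ibp (v : SchwartzMap E2 ℂ) (i : Fin 2) :
    ∫ x : E2, ((1 + ‖x‖^2 : ℝ) : ℂ) * (starRingEnd ℂ) (pdS i v x) * (pdS i v x)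
    = - ∫ x : E2, (((1 + ‖x‖^2 : ℝ) : ℂ) * (starRingEnd ℂ) (pdS i (pdS i v) x)
        + 2 * ((x i : ℝ) : ℂ) * (starRingEnd ℂ) (pdS i v x)) * v x := by
  set G := pdS i v with hG
  set H := pdS i G with hH
  set F : E2 → ℂ := fun y => ((1 + ‖y‖^2 : ℝ) : ℂ) * (starRingEnd ℂ) (G y) with hF
  set F' : E2 → E2 →L[ℝ] ℂ := fun y =>
    ((1 + ‖y‖^2 : ℝ) : ℂ) • (Complex.conjCLE.toContinuousLinearMap.comp (fderiv ℝ (⇑G) y))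
    + (starRingEnd ℂ) (G y) • (Complex.ofRealCLM.comp ((2:ℕ) • (innerSL ℝ y)))
    with hF'
  have hFd : ∀ y, HasFDerivAt F (F' y) y := by
    intro y
    have hW : HasFDerivAt (fun z : E2 => ((1 + ‖z‖^2 : ℝ) : ℂ))
        (Complex.ofRealCLM.comp ((2:ℕ) • (innerSL ℝ y))) y :=
      (Complex.ofRealCLM.hasFDerivAt.comp y
        ((hasStrictFDerivAt_norm_sq y).hasFDerivAt.const_add 1) : _)
    have hGd : HasFDerivAt (⇑G) (fderiv ℝ (⇑G) y) y := G.differentiableAt.hasFDerivAt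
    have hc : HasFDerivAt (fun z => (starRingEnd ℂ) (G z))
        (Complex.conjCLE.toContinuousLinearMap.comp (fderiv ℝ (⇑G) y)) y :=
      (Complex.conjCLE.toContinuousLinearMap.hasFDerivAt.comp y hGd : _)
    exact hW.mul hc
  have hsingle : ∀ y : E2, ((innerSL ℝ y) (EuclideanSpace.single i (1:ℝ)) : ℝ) = y i := by
    intro y
    rw [innerSL_apply_apply, EuclideanSpace.inner_single_right]
    simp
  have hF'app : ∀ x : E2, F' x (EuclideanSpace.single i 1)
      = ((1 + ‖x‖^2 : ℝ) : ℂ) * (starRingEnd ℂ) (H x)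
        + 2 * ((x i : ℝ) : ℂ) * (starRingEnd ℂ) (G x) := by
    intro x
    have h1 : fderiv ℝ (⇑G) x (EuclideanSpace.single i 1) = H x := rfl
    simp only [hF', ContinuousLinearMap.add_apply, ContinuousLinearMap.smul_apply,
      ContinuousLinearMap.coe_comp', Function.comp_apply,
      ContinuousLinearMap.coe_smul', Pi.smul_apply, h1]
    rw [hsingle x]
    simp only [ContinuousLinearEquiv.coe_coe, Complex.conjCLE_apply, Complex.ofRealCLM_apply,
      smul_eq_mul]
    push_cast
    ring
  have hxle : ∀ x : E2, 2*|x i| ≤ 1 + ‖x‖^2 := by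
    intro x
    have := abs_coord_le x i
    nlinarith [abs_nonneg (x i), norm_nonneg x, sq_nonneg (1 - ‖x‖)]
  -- continuity facts
  have hcW : Continuous (fun x : E2 => ((1 + ‖x‖^2 : ℝ) : ℂ)) := by fun_prop
  have hcG : Continuous (fun x : E2 => (starRingEnd ℂ) (G x)) :=
    Complex.continuous_conj.comp G.continuous
  have hcH : Continuous (fun x : E2 => (starRingEnd ℂ) (H x)) :=
    Complex.continuous_conj.comp H.continuous
  have hcxi : Continuous (fun x : E2 => ((x i : ℝ) : ℂ)) :=
    Complex.continuous_ofReal.comp (EuclideanSpace.proj (𝕜 := ℝ) i).continuous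
  -- integrability
  have h1 : Integrable (fun x : E2 =>
      ((ContinuousLinearMap.mul ℝ ℂ) (F' x (EuclideanSpace.single i 1))) (v x)) := by
    have heq : (fun x : E2 => ((ContinuousLinearMap.mul ℝ ℂ) (F' x (EuclideanSpace.single i 1))) (v x))
        = fun x : E2 => (((1 + ‖x‖^2 : ℝ) : ℂ) * (starRingEnd ℂ) (H x)
            + 2 * ((x i : ℝ) : ℂ) * (starRingEnd ℂ) (G x)) * v x := by
      funext x; rw [ContinuousLinearMap.mul_apply', hF'app]
    rw [heq]
    have hA : Integrable (fun x : E2 =>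
        (1+‖x‖^2)^1 * (‖H x‖ * ‖v x‖) + (1+‖x‖^2)^1 * (‖G x‖ * ‖v x‖)) :=
      (integrable_weight_mul H v 1).add (integrable_weight_mul G v 1)
    apply hA.mono' ?_ (ae_of_all _ ?_)
    · exact (((hcW.mul hcH).add ((continuous_const.mul hcxi).mul hcG)).mul v.continuous).aestronglyMeasurable
    · intro x
      have hb1 : ‖((1 + ‖x‖^2 : ℝ) : ℂ) * (starRingEnd ℂ) (H x)‖ = (1+‖x‖^2) * ‖H x‖ := by
        rw [norm_mul, Complex.norm_real, RCLike.norm_conj]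
        rw [Real.norm_of_nonneg (by positivity)]
      have hb2 : ‖2 * ((x i : ℝ) : ℂ) * (starRingEnd ℂ) (G x)‖ ≤ (1+‖x‖^2) * ‖G x‖ := by
        have h2 : ‖(2:ℂ)‖ = 2 := by norm_num
        rw [norm_mul, norm_mul, Complex.norm_real, RCLike.norm_conj, h2, Real.norm_eq_abs]
        nlinarith [hxle x, norm_nonneg (G x), abs_nonneg (x i)]
      calc ‖(((1 + ‖x‖^2 : ℝ) : ℂ) * (starRingEnd ℂ) (H x)
            + 2 * ((x i : ℝ) : ℂ) * (starRingEnd ℂ) (G x)) * v x‖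
          ≤ (‖((1 + ‖x‖^2 : ℝ) : ℂ) * (starRingEnd ℂ) (H x)‖
            + ‖2 * ((x i : ℝ) : ℂ) * (starRingEnd ℂ) (G x)‖) * ‖v x‖ := by
            rw [norm_mul]
            exact mul_le_mul_of_nonneg_right (norm_add_le _ _) (norm_nonneg _)
        _ ≤ ((1+‖x‖^2) * ‖H x‖ + (1+‖x‖^2) * ‖G x‖) * ‖v x‖ := by
            apply mul_le_mul_of_nonneg_right _ (norm_nonneg _)
            rw [hb1]; exact add_le_add le_rfl hb2
        _ = (1+‖x‖^2)^1 * (‖H x‖ * ‖v x‖) + (1+‖x‖^2)^1 * (‖G x‖ * ‖v x‖) := by ring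
  have h2 : Integrable (fun x : E2 =>
      ((ContinuousLinearMap.mul ℝ ℂ) (F x)) (fderiv ℝ (⇑v) x (EuclideanSpace.single i 1))) := by
    have heq : (fun x : E2 => ((ContinuousLinearMap.mul ℝ ℂ) (F x)) (fderiv ℝ (⇑v) x (EuclideanSpace.single i 1)))
        = fun x : E2 => (((1 + ‖x‖^2 : ℝ) : ℂ) * (starRingEnd ℂ) (G x)) * G x := by
      funext x; rw [ContinuousLinearMap.mul_apply']; rfl
    rw [heq]
    apply (integrable_weight_mul G G 1).mono' ?_ (ae_of_all _ ?_)
    · exact ((hcW.mul hcG).mul G.continuous).aestronglyMeasurable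
    · intro x
      apply le_of_eq
      rw [norm_mul, norm_mul, Complex.norm_real, RCLike.norm_conj,
        Real.norm_of_nonneg (by positivity : (0:ℝ) ≤ 1 + ‖x‖^2)]
      ring
  have h3 : Integrable (fun x : E2 => ((ContinuousLinearMap.mul ℝ ℂ) (F x)) (v x)) := by
    have heq : (fun x : E2 => ((ContinuousLinearMap.mul ℝ ℂ) (F x)) (v x))
        = fun x : E2 => (((1 + ‖x‖^2 : ℝ) : ℂ) * (starRingEnd ℂ) (G x)) * v x := by
      funext x; rw [ContinuousLinearMap.mul_apply']
    rw [heq]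
    apply (integrable_weight_mul G v 1).mono' ?_ (ae_of_all _ ?_)
    · exact ((hcW.mul hcG).mul v.continuous).aestronglyMeasurable
    · intro x
      apply le_of_eq
      rw [norm_mul, norm_mul, Complex.norm_real, RCLike.norm_conj,
        Real.norm_of_nonneg (by positivity : (0:ℝ) ≤ 1 + ‖x‖^2)]
      ring
  have key := integral_bilinear_hasFDerivAt_right_eq_neg_left_of_integrable (μ := volume)
    (B := ContinuousLinearMap.mul ℝ ℂ) (f := F) (f' := F') (g := ⇑v)
    (g' := fun y => fderiv ℝ (⇑v) y) (v := EuclideanSpace.single i 1)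
    h1 h2 h3 (fun y _ => hFd y) (fun y _ => v.differentiableAt.hasFDerivAt)
  have eL : (fun x : E2 => ((ContinuousLinearMap.mul ℝ ℂ) (F x)) (fderiv ℝ (⇑v) x (EuclideanSpace.single i 1)))
      = fun x : E2 => ((1 + ‖x‖^2 : ℝ) : ℂ) * (starRingEnd ℂ) (G x) * G x := by
    funext x; rw [ContinuousLinearMap.mul_apply']; rfl
  have eR : (fun x : E2 => ((ContinuousLinearMap.mul ℝ ℂ) (F' x (EuclideanSpace.single i 1))) (v x))
      = fun x : E2 => (((1 + ‖x‖^2 : ℝ) : ℂ) * (starRingEnd ℂ) (H x)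
          + 2 * ((x i : ℝ) : ℂ) * (starRingEnd ℂ) (G x)) * v x := by
    funext x; rw [ContinuousLinearMap.mul_apply', hF'app]
  rw [eL, eR] at key
  exact key

lemma scalar_ineq (W a b g0 g1 c0 c1 : ℝ) (hW1 : 1 ≤ W) (hb : 0 ≤ b)
    (hg0 : 0 ≤ g0) (hg1 : 0 ≤ g1)
    (hx : c0^2 + c1^2 ≤ W) :
    (W*a + 2*c0*g0 + 2*c1*g1) * b
      ≤ 1/2*a^2 + 5/2*(W^2*b^2) + 1/2*(W*(g0^2+g1^2)) := by
  have h1 : W*a*b ≤ 1/2*a^2 + 1/2*W^2*b^2 := by nlinarith [sq_nonneg (a - W*b)]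
  have h2 : 2*c0*g0*b ≤ 1/2*g0^2 + 2*c0^2*b^2 := by nlinarith [sq_nonneg (g0 - 2*c0*b)]
  have h3 : 2*c1*g1*b ≤ 1/2*g1^2 + 2*c1^2*b^2 := by nlinarith [sq_nonneg (g1 - 2*c1*b)]
  have h4 : 2*c0^2*b^2 + 2*c1^2*b^2 ≤ 2*W^2*b^2 := by
    have hW2 : W ≤ W^2 := by nlinarith
    have hmul := mul_le_mul_of_nonneg_right hx (sq_nonneg b)
    have hmul2 := mul_le_mul_of_nonneg_right hW2 (sq_nonneg b)
    nlinarith [hmul, hmul2]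
  have h5 : 1/2*g0^2 ≤ 1/2*(W*g0^2) := by nlinarith [sq_nonneg g0]
  have h6 : 1/2*g1^2 ≤ 1/2*(W*g1^2) := by nlinarith [sq_nonneg g1]
  nlinarith [h1, h2, h3, h4, h5, h6]

/-- `∫ ⟨x⟩² |∇v|² ≤ C (‖Δv‖²_{L²} + ‖⟨x⟩² v‖²_{L²})` for Schwartz functions. -/
theorem weighted_gradient_bound :
    ∃ C : ℝ, 0 < C ∧ ∀ v : SchwartzMap E2 ℂ,
      (∫ x : E2, (1 + ‖x‖^2) * gradSq (fun y => v y) x)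
        ≤ C * ((∫ x : E2, ‖lap (fun y => v y) x‖^2)
          + ∫ x : E2, (1 + ‖x‖^2)^2 * ‖v x‖^2) := by
  refine ⟨5, by norm_num, fun v => ?_⟩
  -- notation
  set Ls : SchwartzMap E2 ℂ := pdS 0 (pdS 0 v) + pdS 1 (pdS 1 v) with hLs
  have hpd : ∀ (f : SchwartzMap E2 ℂ) (i : Fin 2), pd i (fun y => f y) = fun x => pdS i f x := by
    intro f i; funext x; simp [pd, pdS, LineDeriv.lineDerivOpCLM_apply, SchwartzMap.lineDerivOp_apply_eq_fderiv]
  have hlap : (fun x => lap (fun y => v y) x) = fun x => Ls x := by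
    funext x
    simp only [lap, Fin.sum_univ_two, hLs, SchwartzMap.add_apply]
    rw [hpd v 0, hpd v 1]
    rw [congrFun (hpd (pdS 0 v) 0) x, congrFun (hpd (pdS 1 v) 1) x]
  have hgrad : ∀ x : E2, gradSq (fun y => v y) x = ∑ i : Fin 2, ‖pdS i v x‖^2 := by
    intro x
    simp only [gradSq]
    refine Finset.sum_congr rfl fun i _ => ?_
    rw [hpd v i]
  -- integrability of w * |∂v|²
  have hTi_int : ∀ i : Fin 2, Integrable (fun x : E2 => (1+‖x‖^2) * ‖pdS i v x‖^2) := by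
    intro i
    apply (integrable_weight_mul (pdS i v) (pdS i v) 1).congr (ae_of_all _ fun x => ?_)
    simp only [pow_one]; ring
  -- T as a sum
  set T : ℝ := ∫ x : E2, (1 + ‖x‖^2) * gradSq (fun y => v y) x with hT
  have hTsum : T = (∫ x : E2, (1+‖x‖^2) * ‖pdS 0 v x‖^2)
      + ∫ x : E2, (1+‖x‖^2) * ‖pdS 1 v x‖^2 := by
    rw [hT, ← integral_add (hTi_int 0) (hTi_int 1)]
    congr 1; funext x
    rw [hgrad x, Fin.sum_univ_two]; ring
  -- complex identity
  have hreal : ∀ i : Fin 2, ∫ x : E2, ((1 + ‖x‖^2 : ℝ) : ℂ) * (starRingEnd ℂ) (pdS i v x) * (pdS i v x)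
      = (((∫ x : E2, (1+‖x‖^2) * ‖pdS i v x‖^2) : ℝ) : ℂ) := by
    intro i
    rw [show (fun x : E2 => ((1 + ‖x‖^2 : ℝ) : ℂ) * (starRingEnd ℂ) (pdS i v x) * (pdS i v x))
        = fun x : E2 => (((1+‖x‖^2) * ‖pdS i v x‖^2 : ℝ) : ℂ) from funext fun x => by
      rw [mul_assoc, mul_comm ((starRingEnd ℂ) (pdS i v x)) (pdS i v x), Complex.mul_conj']; push_cast; ring]
    exact integral_ofReal
  have hkey : ((T : ℝ) : ℂ)
      = - ∫ x : E2, ((((1 + ‖x‖^2 : ℝ) : ℂ) * (starRingEnd ℂ) (pdS 0 (pdS 0 v) x)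
          + 2 * ((x 0 : ℝ) : ℂ) * (starRingEnd ℂ) (pdS 0 v x)) * v x
        + (((1 + ‖x‖^2 : ℝ) : ℂ) * (starRingEnd ℂ) (pdS 1 (pdS 1 v) x)
          + 2 * ((x 1 : ℝ) : ℂ) * (starRingEnd ℂ) (pdS 1 v x)) * v x) := by
    rw [integral_add (integrable_Z v 0) (integrable_Z v 1), neg_add]
    rw [← ibp v 0, ← ibp v 1, hreal 0, hreal 1, hTsum]
    push_cast; ring
  -- pointwise bound
  set Ψ : E2 → ℝ := fun x => (1/2)*‖Ls x‖^2 + (5/2)*((1+‖x‖^2)^2*‖v x‖^2)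
      + (1/2)*((1+‖x‖^2) * (‖pdS 0 v x‖^2 + ‖pdS 1 v x‖^2)) with hΨ
  have hpt : ∀ x : E2, ‖(((1 + ‖x‖^2 : ℝ) : ℂ) * (starRingEnd ℂ) (pdS 0 (pdS 0 v) x)
          + 2 * ((x 0 : ℝ) : ℂ) * (starRingEnd ℂ) (pdS 0 v x)) * v x
        + (((1 + ‖x‖^2 : ℝ) : ℂ) * (starRingEnd ℂ) (pdS 1 (pdS 1 v) x)
          + 2 * ((x 1 : ℝ) : ℂ) * (starRingEnd ℂ) (pdS 1 v x)) * v x‖ ≤ Ψ x := by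
    intro x
    have hcomb : (((1 + ‖x‖^2 : ℝ) : ℂ) * (starRingEnd ℂ) (pdS 0 (pdS 0 v) x)
          + 2 * ((x 0 : ℝ) : ℂ) * (starRingEnd ℂ) (pdS 0 v x)) * v x
        + (((1 + ‖x‖^2 : ℝ) : ℂ) * (starRingEnd ℂ) (pdS 1 (pdS 1 v) x)
          + 2 * ((x 1 : ℝ) : ℂ) * (starRingEnd ℂ) (pdS 1 v x)) * v x
        = (((1 + ‖x‖^2 : ℝ) : ℂ) * (starRingEnd ℂ) (Ls x)
          + 2 * ((x 0 : ℝ) : ℂ) * (starRingEnd ℂ) (pdS 0 v x)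
          + 2 * ((x 1 : ℝ) : ℂ) * (starRingEnd ℂ) (pdS 1 v x)) * v x := by
      simp only [hLs, SchwartzMap.add_apply, map_add]
      ring
    rw [hcomb]
    have hW1 : (1:ℝ) ≤ 1 + ‖x‖^2 := by nlinarith [sq_nonneg ‖x‖]
    have hW0 : (0:ℝ) ≤ 1 + ‖x‖^2 := by linarith
    have hnorm : ‖(((1 + ‖x‖^2 : ℝ) : ℂ) * (starRingEnd ℂ) (Ls x)
          + 2 * ((x 0 : ℝ) : ℂ) * (starRingEnd ℂ) (pdS 0 v x)
          + 2 * ((x 1 : ℝ) : ℂ) * (starRingEnd ℂ) (pdS 1 v x)) * v x‖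
        ≤ ((1 + ‖x‖^2) * ‖Ls x‖ + 2 * |x 0| * ‖pdS 0 v x‖ + 2 * |x 1| * ‖pdS 1 v x‖) * ‖v x‖ := by
      rw [norm_mul]
      apply mul_le_mul_of_nonneg_right _ (norm_nonneg _)
      have e1 := norm_add_le (((1 + ‖x‖^2 : ℝ) : ℂ) * (starRingEnd ℂ) (Ls x)
          + 2 * ((x 0 : ℝ) : ℂ) * (starRingEnd ℂ) (pdS 0 v x))
          (2 * ((x 1 : ℝ) : ℂ) * (starRingEnd ℂ) (pdS 1 v x))
      have e2 := norm_add_le (((1 + ‖x‖^2 : ℝ) : ℂ) * (starRingEnd ℂ) (Ls x))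
          (2 * ((x 0 : ℝ) : ℂ) * (starRingEnd ℂ) (pdS 0 v x))
      have h2c : ‖(2:ℂ)‖ = 2 := by norm_num
      simp only [norm_mul, Complex.norm_real, RCLike.norm_conj, h2c,
        Real.norm_of_nonneg hW0, Real.norm_eq_abs] at e1 e2
      calc _ ≤ _ := e1
        _ ≤ _ := by exact add_le_add_left e2 _
    refine hnorm.trans ?_
    have hx : |x 0|^2 + |x 1|^2 ≤ 1 + ‖x‖^2 := by
      rw [_root_.sq_abs, _root_.sq_abs]
      have := norm_sq_eq x
      rw [Fin.sum_univ_two] at this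
      linarith
    rw [hΨ]
    exact scalar_ineq (1 + ‖x‖^2) (‖Ls x‖) (‖v x‖) (‖pdS 0 v x‖) (‖pdS 1 v x‖)
      (|x 0|) (|x 1|) hW1 (norm_nonneg _) (norm_nonneg _) (norm_nonneg _) hx
  -- integrability of Ψ
  have hΨint : Integrable Ψ := by
    apply Integrable.add
    apply Integrable.add
    · apply ((integrable_weight_mul Ls Ls 0).const_mul (1/2)).congr (ae_of_all _ fun x => ?_)
      simp only [Pi.add_apply]; ring
    · apply ((integrable_weight_mul v v 2).const_mul (5/2)).congr (ae_of_all _ fun x => ?_)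
      simp only [Pi.add_apply]; ring
    · apply (((hTi_int 0).add (hTi_int 1)).const_mul (1/2)).congr (ae_of_all _ fun x => ?_)
      simp only [Pi.add_apply]; ring
  -- main chain
  have hle1 : T ≤ ∫ x : E2, Ψ x := by
    calc T ≤ |T| := le_abs_self T
      _ = ‖((T:ℝ):ℂ)‖ := by rw [Complex.norm_real, Real.norm_eq_abs]
      _ = ‖∫ x : E2, ((((1 + ‖x‖^2 : ℝ) : ℂ) * (starRingEnd ℂ) (pdS 0 (pdS 0 v) x)
          + 2 * ((x 0 : ℝ) : ℂ) * (starRingEnd ℂ) (pdS 0 v x)) * v x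
        + (((1 + ‖x‖^2 : ℝ) : ℂ) * (starRingEnd ℂ) (pdS 1 (pdS 1 v) x)
          + 2 * ((x 1 : ℝ) : ℂ) * (starRingEnd ℂ) (pdS 1 v x)) * v x)‖ := by rw [hkey, norm_neg]
      _ ≤ ∫ x : E2, ‖(((1 + ‖x‖^2 : ℝ) : ℂ) * (starRingEnd ℂ) (pdS 0 (pdS 0 v) x)
          + 2 * ((x 0 : ℝ) : ℂ) * (starRingEnd ℂ) (pdS 0 v x)) * v x
        + (((1 + ‖x‖^2 : ℝ) : ℂ) * (starRingEnd ℂ) (pdS 1 (pdS 1 v) x)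
          + 2 * ((x 1 : ℝ) : ℂ) * (starRingEnd ℂ) (pdS 1 v x)) * v x‖ :=
          norm_integral_le_integral_norm _
      _ ≤ ∫ x : E2, Ψ x := by
          apply integral_mono_of_nonneg (ae_of_all _ fun x => norm_nonneg _) hΨint
          exact ae_of_all _ hpt
  -- split ∫Ψ
  have hsplit : ∫ x : E2, Ψ x = (1/2) * (∫ x : E2, ‖Ls x‖^2)
      + (5/2) * (∫ x : E2, (1+‖x‖^2)^2*‖v x‖^2) + (1/2) * T := by
    have i1 : Integrable (fun x : E2 => (1/2)*‖Ls x‖^2) := by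
      apply ((integrable_weight_mul Ls Ls 0).const_mul (1/2)).congr (ae_of_all _ fun x => ?_)
      simp only [Pi.add_apply]; ring
    have i2 : Integrable (fun x : E2 => (5/2)*((1+‖x‖^2)^2*‖v x‖^2)) := by
      apply ((integrable_weight_mul v v 2).const_mul (5/2)).congr (ae_of_all _ fun x => ?_)
      simp only [Pi.add_apply]; ring
    have i3 : Integrable (fun x : E2 => (1/2)*((1+‖x‖^2) * (‖pdS 0 v x‖^2 + ‖pdS 1 v x‖^2))) := by
      apply (((hTi_int 0).add (hTi_int 1)).const_mul (1/2)).congr (ae_of_all _ fun x => ?_)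
      simp only [Pi.add_apply]; ring
    have i12 : Integrable (fun x : E2 => (1/2)*‖Ls x‖^2 + (5/2)*((1+‖x‖^2)^2*‖v x‖^2)) :=
      i1.add i2
    rw [hΨ]
    rw [integral_add i12 i3, integral_add i1 i2, MeasureTheory.integral_const_mul, MeasureTheory.integral_const_mul,
      MeasureTheory.integral_const_mul]
    congr 1
    rw [hTsum, ← integral_add (hTi_int 0) (hTi_int 1)]
    congr 1
    apply integral_congr_ae
    filter_upwards with x
    ring
  -- lap rewrite
  have hA : (∫ x : E2, ‖lap (fun y => v y) x‖^2) = ∫ x : E2, ‖Ls x‖^2 := by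
    congr 1; funext x; rw [congrFun hlap x]
  have hA0 : 0 ≤ ∫ x : E2, ‖lap (fun y => v y) x‖^2 :=
    integral_nonneg fun x => by positivity
  have hB0 : 0 ≤ ∫ x : E2, (1+‖x‖^2)^2*‖v x‖^2 :=
    integral_nonneg fun x => by positivity
  have := hle1
  rw [hsplit, ← hA] at this
  linarith
end
end

section
/- There exists a constant C > 0 such that for every Schwartz function v : ℝ² → ℂ and every i ∈ {1, 2} one has ‖∇(∂_{x_i} v)‖²_{L²} + ‖ |x| ∂_{x_i} v ‖²_{L²} ≤ C ‖A v‖²_{L²}. -/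
open MeasureTheory Complex

noncomputable section

set_option synthInstance.maxHeartbeats 1000000
set_option maxHeartbeats 1000000

namespace HOProof

open ContinuousLinearMap SchwartzMap






/-- real-bilinear pairing on ℂ : B a b = Re (conj a * b). -/
def B : ℂ →L[ℝ] ℂ →L[ℝ] ℝ := innerSL ℝ

lemma B_apply (a b : ℂ) : B a b = ((starRingEnd ℂ) a * b).re :=
  (Complex.inner a b).trans (by rw [mul_comm])

lemma B_self (a : ℂ) : B a a = ‖a‖ ^ 2 := real_inner_self_eq_norm_sq a

lemma B_comm (a b : ℂ) : B a b = B b a := real_inner_comm b a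

lemma B_le (a b : ℂ) : B a b ≤ ‖a‖ * ‖b‖ :=
  (real_inner_le_norm a b)

lemma neg_B_le (a b : ℂ) : -B a b ≤ ‖a‖ * ‖b‖ := by
  have := abs_real_inner_le_norm a b
  have h : |B a b| ≤ ‖a‖ * ‖b‖ := this
  linarith [neg_abs_le (B a b)]

lemma B_real_mul (r : ℝ) (a b : ℂ) : B ((r : ℂ) * a) b = r * B a b := by
  have : ((r : ℂ) * a) = r • a := by simp [Complex.real_smul]
  rw [this]
  exact real_inner_smul_left a b r

-- coordinate function has temperate growth
lemma coordTG (i : Fin 2) : Function.HasTemperateGrowth (fun x : E2 => ((x i : ℝ) : ℂ)) := by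
  have : (fun x : E2 => ((x i : ℝ) : ℂ))
      = ⇑(Complex.ofRealCLM.comp (EuclideanSpace.proj i : E2 →L[ℝ] ℝ)) := rfl
  rw [this]
  exact ContinuousLinearMap.hasTemperateGrowth _

set_option synthInstance.maxHeartbeats 1000000
set_option maxHeartbeats 1000000

def msq : E2 → ℂ := fun x => ((‖x‖ ^ 2 : ℝ) : ℂ)

def L : E2 →L[ℝ] E2 →L[ℝ] ℂ :=
  (ContinuousLinearMap.compL ℝ E2 ℝ ℂ Complex.ofRealCLM).comp
    ((2 : ℝ) • (innerSL ℝ : E2 →L[ℝ] E2 →L[ℝ] ℝ))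

lemma L_apply (x y : E2) : L x y = ((2 * @inner ℝ E2 _ x y : ℝ) : ℂ) := by
  simp [L, two_smul, two_mul]

lemma hasFDerivAt_msq (x : E2) : HasFDerivAt msq (L x) x := by
  have h1 : HasFDerivAt (fun y : E2 => ‖y‖ ^ 2)
      (2 • ((innerSL ℝ x).comp (ContinuousLinearMap.id ℝ E2))) x :=
    (hasFDerivAt_id x).norm_sq
  have h2 := Complex.ofRealCLM.hasFDerivAt.comp x h1
  refine HasFDerivAt.congr_fderiv h2 ?_
  ext y
  simp [L, two_smul]

lemma msqTG : Function.HasTemperateGrowth msq := by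
  apply Function.HasTemperateGrowth.of_fderiv (k := 2) (C := 1)
  · have : fderiv ℝ msq = ⇑L := by
      funext x; exact (hasFDerivAt_msq x).fderiv
    rw [this]
    exact L.hasTemperateGrowth
  · exact fun x => (hasFDerivAt_msq x).differentiableAt
  · intro x
    calc ‖msq x‖ = ‖x‖ ^ 2 := by
          rw [msq, Complex.norm_real]; exact abs_of_nonneg (sq_nonneg _)
      _ ≤ 1 * (1 + ‖x‖) ^ 2 := by nlinarith [norm_nonneg x]


abbrev S2 := SchwartzMap E2 ℂ

/-- directional derivative operator on Schwartz space. -/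
def D (i : Fin 2) : S2 →L[ℝ] S2 := LineDeriv.lineDerivOpCLM ℝ S2 (EuclideanSpace.single i (1:ℝ) : E2)

lemma D_apply (i : Fin 2) (f : S2) (x : E2) :
    D i f x = fderiv ℝ f x (EuclideanSpace.single i 1) := SchwartzMap.lineDerivOp_apply_eq_fderiv _ f x

/-- multiplication by ‖x‖². -/
def M : S2 →L[ℝ] S2 := bilinLeftCLM (ContinuousLinearMap.mul ℝ ℂ) msqTG

lemma M_apply (f : S2) (x : E2) : M f x = f x * msq x := rfl

/-- multiplication by the i-th coordinate. -/
def Xc (i : Fin 2) : S2 →L[ℝ] S2 := bilinLeftCLM (ContinuousLinearMap.mul ℝ ℂ) (coordTG i)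

lemma Xc_apply (i : Fin 2) (f : S2) (x : E2) : Xc i f x = f x * ((x i : ℝ) : ℂ) := rfl

/-- the harmonic oscillator on Schwartz space. -/
def AS (f : S2) : S2 := -(D 0 (D 0 f)) - D 1 (D 1 f) + M f

lemma AS_apply (f : S2) (x : E2) :
    AS f x = -(D 0 (D 0 f) x) - D 1 (D 1 f) x + f x * msq x := rfl

-- symmetry of second derivatives
lemma D_coe (i : Fin 2) (f : S2) :
    ⇑(D i f) = fun y => fderiv ℝ (⇑f) y (EuclideanSpace.single i 1) :=
  funext (D_apply i f)

lemma D_comm (i j : Fin 2) (f : S2) : D i (D j f) = D j (D i f) := by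
  apply SchwartzMap.ext
  intro x
  have hsym : IsSymmSndFDerivAt ℝ (⇑f) x :=
    (f.smooth ⊤).contDiffAt.isSymmSndFDerivAt (by simp; exact WithTop.coe_le_coe.2 le_top)
  have key : ∀ (a b : E2), fderiv ℝ (fun y => fderiv ℝ (⇑f) y a) x b
      = fderiv ℝ (fderiv ℝ (⇑f)) x b a := by
    intro a b
    have hdiff : DifferentiableAt ℝ (fderiv ℝ (⇑f)) x := by
      have h1 : ContDiff ℝ 1 (fderiv ℝ (⇑f)) :=
        (f.smooth ⊤).fderiv_right (WithTop.coe_le_coe.2 le_top)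
      exact h1.differentiable one_ne_zero x
    rw [fderiv_clm_apply hdiff (differentiableAt_const a)]
    simp
  rw [D_apply, D_coe, D_apply, D_coe, key, key]
  exact hsym _ _


-- integrability of B (f x) (g x) for Schwartz f g
lemma integrable_B (f g : S2) : Integrable (fun x => B (f x) (g x)) (volume : Measure E2) := by
  have hb : ∀ x : E2, ‖B (f x) (g x)‖ ≤ (SchwartzMap.seminorm ℝ 0 0 f) * ‖g x‖ := by
    intro x
    have h1 : ‖B (f x) (g x)‖ ≤ ‖f x‖ * ‖g x‖ := by
      rw [Real.norm_eq_abs]; exact abs_real_inner_le_norm (f x) (g x)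
    have h2 : ‖f x‖ ≤ (SchwartzMap.seminorm ℝ 0 0 f) := f.norm_le_seminorm ℝ x
    nlinarith [norm_nonneg (g x), norm_nonneg (f x)]
  apply (g.integrable.norm.const_mul ((SchwartzMap.seminorm ℝ 0 0 f) : ℝ)).mono' ?_ ?_
  · apply Continuous.aestronglyMeasurable
    exact (B.continuous₂.comp (f.continuous.prodMk g.continuous) : _)
  · exact Filter.Eventually.of_forall hb

-- integration by parts
lemma ibp (f g : S2) (i : Fin 2) :
    ∫ x : E2, B (f x) (D i g x) = - ∫ x : E2, B (D i f x) (g x) := by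
  have h := integral_bilinear_fderiv_right_eq_neg_left_of_integrable
    (μ := (volume : Measure E2)) (B := B) (f := ⇑f) (g := ⇑g) (v := EuclideanSpace.single i 1)
    ?_ ?_ (integrable_B f g) (fun x _ => f.differentiableAt) (fun x _ => g.differentiableAt)
  · simp only [D_apply]; exact h
  · have : (fun x => B (fderiv ℝ (⇑f) x (EuclideanSpace.single i 1)) (g x))
        = fun x => B (D i f x) (g x) := by funext x; rw [D_apply]
    rw [this]; exact integrable_B (D i f) g
  · have : (fun x => B (f x) (fderiv ℝ (⇑g) x (EuclideanSpace.single i 1)))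
        = fun x => B (f x) (D i g x) := by funext x; rw [D_apply]
    rw [this]; exact integrable_B f (D i g)


lemma M_coe (v : S2) : ⇑(M v) = fun y => v y * msq y := rfl

lemma L_single (x : E2) (i : Fin 2) : L x (EuclideanSpace.single i 1) = ((2 * x i : ℝ) : ℂ) := by
  rw [L_apply]
  norm_cast
  rw [EuclideanSpace.inner_single_right]
  simp [RCLike.inner_apply]

-- product rule : D i (M v) = 2 • Xc i v + M (D i v)
lemma D_M (i : Fin 2) (v : S2) : D i (M v) = (2:ℝ) • Xc i v + M (D i v) := by
  apply SchwartzMap.ext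
  intro x
  have hmsq : DifferentiableAt ℝ msq x := (hasFDerivAt_msq x).differentiableAt
  have hf : fderiv ℝ (fun y => v y * msq y) x
      = v x • fderiv ℝ msq x + msq x • fderiv ℝ (⇑v) x :=
    fderiv_mul v.differentiableAt hmsq
  have e1 : D i (M v) x = v x * L x (EuclideanSpace.single i 1)
      + msq x * D i v x := by
    rw [D_apply, M_coe, hf, (hasFDerivAt_msq x).fderiv]
    simp [D_apply, smul_eq_mul]
  rw [e1, L_single]
  have e2 : ((2:ℝ) • Xc i v + M (D i v)) x = (2:ℝ) • (v x * ((x i : ℝ):ℂ)) + D i v x * msq x := rfl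
  rw [e2]
  push_cast
  ring_nf
  simp [Complex.real_smul]
  ring

-- the commutator identity
lemma AS_comm (i : Fin 2) (v : S2) : AS (D i v) = D i (AS v) - (2:ℝ) • Xc i v := by
  have h3 : ∀ j : Fin 2, D i (D j (D j v)) = D j (D j (D i v)) := by
    intro j
    rw [D_comm i j, D_comm i j]
  show -(D 0 (D 0 (D i v))) - D 1 (D 1 (D i v)) + M (D i v)
      = D i (-(D 0 (D 0 v)) - D 1 (D 1 v) + M v) - (2:ℝ) • Xc i v
  rw [map_add, map_sub, map_neg, h3 0, h3 1, D_M]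
  module

-- the quadratic form identity
lemma B_M_self (w : S2) (x : E2) : B (M w x) (w x) = ‖x‖^2 * ‖w x‖^2 := by
  have : M w x = (‖x‖^2 : ℝ) • (w x) := by
    rw [M_apply, msq, Complex.real_smul, mul_comm]
  rw [this]
  show @inner ℝ ℂ _ ((‖x‖^2 : ℝ) • (w x)) (w x) = _
  rw [real_inner_smul_left]
  have : @inner ℝ ℂ _ (w x) (w x) = ‖w x‖^2 := real_inner_self_eq_norm_sq _
  rw [this]

lemma qform (w : S2) :
    ∫ x : E2, B (AS w x) (w x)
      = ((∫ x : E2, ‖D 0 w x‖^2) + ∫ x : E2, ‖D 1 w x‖^2) + ∫ x : E2, ‖x‖^2 * ‖w x‖^2 := by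
  have hsq : ∀ (f : S2), Integrable (fun x : E2 => ‖f x‖^2) (volume : Measure E2) := by
    intro f
    have : (fun x : E2 => ‖f x‖^2) = fun x => B (f x) (f x) := by
      funext x; rw [B_self]
    rw [this]; exact integrable_B f f
  have hisq : Integrable (fun x : E2 => ‖x‖^2 * ‖w x‖^2) (volume : Measure E2) := by
    have : (fun x : E2 => ‖x‖^2 * ‖w x‖^2) = fun x => B (M w x) (w x) := by
      funext x; rw [B_M_self]
    rw [this]; exact integrable_B (M w) w
  have hinteg : (fun x : E2 => B (AS w x) (w x))
      = fun x => (-(B (D 0 (D 0 w) x) (w x)) - B (D 1 (D 1 w) x) (w x)) + ‖x‖^2 * ‖w x‖^2 := by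
    funext x
    rw [AS_apply, ← M_apply, ← B_M_self]
    simp only [map_add, map_sub, map_neg, ContinuousLinearMap.add_apply,
      ContinuousLinearMap.sub_apply, ContinuousLinearMap.neg_apply]
  have hibp : ∀ j : Fin 2, ∫ x : E2, B (D j (D j w) x) (w x) = -∫ x : E2, ‖D j w x‖^2 := by
    intro j
    have h := ibp (D j w) w j
    have h2 : ∫ x : E2, B (D j w x) (D j w x) = ∫ x : E2, ‖D j w x‖^2 := by
      apply integral_congr_ae; filter_upwards with x; rw [B_self]
    rw [h2] at h
    linarith
  have h1 : Integrable (fun x : E2 => -(B (D 0 (D 0 w) x) (w x)) - B (D 1 (D 1 w) x) (w x))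
      (volume : Measure E2) := ((integrable_B _ w).neg).sub (integrable_B _ w)
  have h2 : Integrable (fun x : E2 => -(B (D 0 (D 0 w) x) (w x))) (volume : Measure E2) :=
    (integrable_B _ w).neg
  rw [hinteg, integral_add h1 hisq, integral_sub h2 (integrable_B _ w), integral_neg,
    hibp 0, hibp 1]
  ring


lemma integrable_sq (f : S2) : Integrable (fun x : E2 => ‖f x‖^2) (volume : Measure E2) := by
  have : (fun x : E2 => ‖f x‖^2) = fun x => B (f x) (f x) := by
    funext x; rw [B_self]
  rw [this]; exact integrable_B f f

lemma integrable_wsq (w : S2) :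
    Integrable (fun x : E2 => ‖x‖^2 * ‖w x‖^2) (volume : Measure E2) := by
  have : (fun x : E2 => ‖x‖^2 * ‖w x‖^2) = fun x => B (M w x) (w x) := by
    funext x; rw [B_M_self]
  rw [this]; exact integrable_B (M w) w

/-- coordinate function as a CLM -/
def coordC (i : Fin 2) : E2 →L[ℝ] ℂ := Complex.ofRealCLM.comp (EuclideanSpace.proj i)

lemma coordC_coe (i : Fin 2) : (fun x : E2 => ((x i : ℝ) : ℂ)) = ⇑(coordC i) := rfl

lemma D_Xc (i : Fin 2) (v : S2) (x : E2) :
    D i (Xc i v) x = D i v x * ((x i : ℝ) : ℂ) + v x := by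
  have hc : DifferentiableAt ℝ (fun y : E2 => ((y i : ℝ) : ℂ)) x := by
    rw [coordC_coe]; exact (coordC i).differentiableAt
  have hXc : ⇑(Xc i v) = fun y => v y * ((y i : ℝ) : ℂ) := rfl
  have hf : fderiv ℝ (fun y : E2 => v y * ((y i : ℝ) : ℂ)) x
      = v x • fderiv ℝ (fun y : E2 => ((y i : ℝ) : ℂ)) x + ((x i : ℝ) : ℂ) • fderiv ℝ (⇑v) x :=
    fderiv_mul v.differentiableAt hc
  have hcf : fderiv ℝ (fun y : E2 => ((y i : ℝ) : ℂ)) x = coordC i := by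
    rw [coordC_coe]; exact (coordC i).fderiv
  have hone : (coordC i) (EuclideanSpace.single i 1) = 1 := by
    simp [coordC]
  rw [D_apply, hXc, hf, ContinuousLinearMap.add_apply, hcf]
  rw [ContinuousLinearMap.smul_apply, ContinuousLinearMap.smul_apply, hone, ← D_apply]
  simp [smul_eq_mul]
  ring

lemma B_Xc_swap (i : Fin 2) (a b : S2) (x : E2) :
    B (Xc i a x) (b x) = B (a x) (Xc i b x) := by
  have h1 : Xc i a x = (x i : ℝ) • (a x) := by
    rw [Xc_apply, Complex.real_smul, mul_comm]
  have h2 : Xc i b x = (x i : ℝ) • (b x) := by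
    rw [Xc_apply, Complex.real_smul, mul_comm]
  rw [h1, h2]
  show @inner ℝ ℂ _ ((x i : ℝ) • a x) (b x) = @inner ℝ ℂ _ (a x) ((x i : ℝ) • b x)
  rw [real_inner_smul_left, real_inner_smul_right]

/-- the key coordinate identity: `2∫ B(xᵢ v, ∂ᵢ v) = -∫ ‖v‖²`. -/
lemma coord_identity (i : Fin 2) (v : S2) :
    2 * ∫ x : E2, B (Xc i v x) (D i v x) = - ∫ x : E2, ‖v x‖^2 := by
  have h := ibp (Xc i v) v i
  have hpt : (fun x : E2 => B (D i (Xc i v) x) (v x))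
      = fun x => B (Xc i (D i v) x) (v x) + B (v x) (v x) := by
    funext x
    rw [D_Xc]
    have : D i v x * ((x i : ℝ) : ℂ) = Xc i (D i v) x := rfl
    rw [this, map_add, ContinuousLinearMap.add_apply]
  rw [hpt, integral_add (integrable_B _ v) (integrable_B v v)] at h
  have hswap : ∫ x : E2, B (Xc i (D i v) x) (v x) = ∫ x : E2, B (Xc i v x) (D i v x) := by
    apply integral_congr_ae; filter_upwards with x
    rw [B_Xc_swap]
    have : B (D i v x) (Xc i v x) = B (Xc i v x) (D i v x) := B_comm _ _
    rw [this]
  have hsq : ∫ x : E2, B (v x) (v x) = ∫ x : E2, ‖v x‖^2 := by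
    apply integral_congr_ae; filter_upwards with x; rw [B_self]
  rw [hswap, hsq] at h
  linarith

lemma coord_le_norm (x : E2) (i : Fin 2) : |x i| ≤ ‖x‖ := by
  have h : x i = @inner ℝ E2 _ (EuclideanSpace.single i 1) x := by
    rw [EuclideanSpace.inner_single_left]; simp [RCLike.inner_apply]
  rw [h]
  calc |@inner ℝ E2 _ (EuclideanSpace.single i 1) x| ≤ ‖EuclideanSpace.single i (1:ℝ)‖ * ‖x‖ :=
        abs_real_inner_le_norm _ _
    _ = ‖x‖ := by rw [EuclideanSpace.norm_single]; simp

/-- `∫‖v‖² ≤ ∫‖AS v‖²`. -/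
lemma L2_le (v : S2) : ∫ x : E2, ‖v x‖^2 ≤ ∫ x : E2, ‖AS v x‖^2 := by
  have h0 := coord_identity 0 v
  have hI1 : Integrable (fun x : E2 => (-2 : ℝ) * B (Xc 0 v x) (D 0 v x)) (volume : Measure E2) :=
    (integrable_B _ _).const_mul _
  have hI2 : Integrable (fun x : E2 =>
      ‖x‖^2 * ‖v x‖^2 + (‖D 0 v x‖^2 + ‖D 1 v x‖^2)) (volume : Measure E2) :=
    (integrable_wsq v).add ((integrable_sq _).add (integrable_sq _))
  have hmono : ∫ x : E2, (-2 : ℝ) * B (Xc 0 v x) (D 0 v x)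
      ≤ ∫ x : E2, (‖x‖^2 * ‖v x‖^2 + (‖D 0 v x‖^2 + ‖D 1 v x‖^2)) := by
    apply integral_mono hI1 hI2
    intro x
    simp only [Pi.add_apply]
    have h1 : -B (Xc 0 v x) (D 0 v x) ≤ ‖Xc 0 v x‖ * ‖D 0 v x‖ := neg_B_le _ _
    have h2 : ‖Xc 0 v x‖ = |x 0| * ‖v x‖ := by
      rw [Xc_apply, norm_mul, Complex.norm_real, Real.norm_eq_abs, mul_comm]
    have h3 : |x 0| ≤ ‖x‖ := coord_le_norm x 0
    have h4 : (0:ℝ) ≤ ‖D 1 v x‖^2 := sq_nonneg _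
    have h5 : (0:ℝ) ≤ ‖v x‖ := norm_nonneg _
    have h6 : (0:ℝ) ≤ ‖D 0 v x‖ := norm_nonneg _
    have h8 : |x 0| * ‖v x‖ * ‖D 0 v x‖ ≤ ‖x‖ * ‖v x‖ * ‖D 0 v x‖ :=
      mul_le_mul_of_nonneg_right (mul_le_mul_of_nonneg_right h3 h5) h6
    nlinarith [sq_nonneg (‖x‖ * ‖v x‖ - ‖D 0 v x‖)]
  have hsplit : ∫ x : E2, (‖x‖^2 * ‖v x‖^2 + (‖D 0 v x‖^2 + ‖D 1 v x‖^2))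
      = (∫ x : E2, ‖x‖^2 * ‖v x‖^2) + ∫ x : E2, (‖D 0 v x‖^2 + ‖D 1 v x‖^2) :=
    integral_add (integrable_wsq v) ((integrable_sq _).add (integrable_sq _))
  have hsplit2 : ∫ x : E2, (‖D 0 v x‖^2 + ‖D 1 v x‖^2)
      = (∫ x : E2, ‖D 0 v x‖^2) + ∫ x : E2, ‖D 1 v x‖^2 :=
    integral_add (integrable_sq _) (integrable_sq _)
  have hc : ∫ x : E2, (-2 : ℝ) * B (Xc 0 v x) (D 0 v x) = ∫ x : E2, ‖v x‖^2 := by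
    rw [integral_const_mul]; linarith
  have step2 := qform v
  have step3 : ∫ x : E2, B (AS v x) (v x)
      ≤ ∫ x : E2, (1/2 * ‖AS v x‖^2 + 1/2 * ‖v x‖^2) := by
    apply integral_mono (integrable_B _ _)
      (((integrable_sq _).const_mul _).add ((integrable_sq _).const_mul _))
    intro x
    simp only [Pi.add_apply]
    have h1 : B (AS v x) (v x) ≤ ‖AS v x‖ * ‖v x‖ := B_le _ _
    nlinarith [sq_nonneg (‖AS v x‖ - ‖v x‖)]
  have hsplit3 : ∫ x : E2, (1/2 * ‖AS v x‖^2 + 1/2 * ‖v x‖^2)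
      = (∫ x : E2, 1/2 * ‖AS v x‖^2) + ∫ x : E2, 1/2 * ‖v x‖^2 :=
    integral_add ((integrable_sq _).const_mul _) ((integrable_sq _).const_mul _)
  rw [hsplit3, integral_const_mul, integral_const_mul] at step3
  rw [hsplit, hsplit2, hc] at hmono
  linarith


lemma q_nonneg (w : S2) : 0 ≤ ∫ x : E2, B (AS w x) (w x) := by
  rw [qform w]
  have n1 : 0 ≤ ∫ x : E2, ‖D 0 w x‖^2 := integral_nonneg fun x => sq_nonneg _
  have n2 : 0 ≤ ∫ x : E2, ‖D 1 w x‖^2 := integral_nonneg fun x => sq_nonneg _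
  have n3 : 0 ≤ ∫ x : E2, ‖x‖^2 * ‖w x‖^2 :=
    integral_nonneg fun x => mul_nonneg (sq_nonneg _) (sq_nonneg _)
  linarith

lemma sq_D_le (w : S2) (i : Fin 2) :
    ∫ x : E2, ‖D i w x‖^2 ≤ ∫ x : E2, B (AS w x) (w x) := by
  have n1 : 0 ≤ ∫ x : E2, ‖D 0 w x‖^2 := integral_nonneg fun x => sq_nonneg _
  have n2 : 0 ≤ ∫ x : E2, ‖D 1 w x‖^2 := integral_nonneg fun x => sq_nonneg _
  have n3 : 0 ≤ ∫ x : E2, ‖x‖^2 * ‖w x‖^2 :=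
    integral_nonneg fun x => mul_nonneg (sq_nonneg _) (sq_nonneg _)
  rw [qform w]
  fin_cases i
  · show ∫ x : E2, ‖D 0 w x‖^2 ≤ _
    linarith
  · show ∫ x : E2, ‖D 1 w x‖^2 ≤ _
    linarith

/-- main estimate : `⟨A ∂ᵢv, ∂ᵢv⟩ ≤ 3 ‖A v‖²`. -/
lemma main_est (v : S2) (i : Fin 2) :
    ∫ x : E2, B (AS (D i v) x) (D i v x) ≤ 3 * ∫ x : E2, ‖AS v x‖^2 := by
  set w : S2 := D i v with hw
  -- split using the commutator
  have hpt : (fun x : E2 => B (AS w x) (w x))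
      = fun x => B (D i (AS v) x) (w x) - (2:ℝ) * B (Xc i v x) (w x) := by
    funext x
    have h1 : AS w x = D i (AS v) x - (2:ℝ) • (Xc i v x) := by
      rw [AS_comm i v]; rfl
    rw [h1, map_sub, ContinuousLinearMap.sub_apply, _root_.map_smul,
      ContinuousLinearMap.smul_apply, smul_eq_mul]
  have hIa : Integrable (fun x : E2 => B (D i (AS v) x) (w x)) (volume : Measure E2) :=
    integrable_B _ _
  have hIb : Integrable (fun x : E2 => (2:ℝ) * B (Xc i v x) (w x)) (volume : Measure E2) :=
    (integrable_B _ _).const_mul _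
  have hsplit : ∫ x : E2, B (AS w x) (w x)
      = (∫ x : E2, B (D i (AS v) x) (w x)) - ∫ x : E2, (2:ℝ) * B (Xc i v x) (w x) := by
    rw [hpt]; exact integral_sub hIa hIb
  have hibp := ibp (AS v) w i
  have hco := coord_identity i v
  have hQ : ∫ x : E2, B (AS w x) (w x)
      = -(∫ x : E2, B (AS v x) (D i w x)) + ∫ x : E2, ‖v x‖^2 := by
    rw [hsplit, integral_const_mul]
    have : ∫ x : E2, B (D i (AS v) x) (w x) = -(∫ x : E2, B (AS v x) (D i w x)) := by
      linarith
    rw [this]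
    have h2 : ∫ x : E2, B (Xc i v x) (w x) = ∫ x : E2, B (Xc i v x) (D i v x) := by rw [← hw]
    rw [h2]
    linarith
  -- bound the first term
  have hb1 : -(∫ x : E2, B (AS v x) (D i w x))
      ≤ ∫ x : E2, (1/2 * ‖AS v x‖^2 + 1/2 * ‖D i w x‖^2) := by
    have : ∫ x : E2, -(B (AS v x) (D i w x))
        ≤ ∫ x : E2, (1/2 * ‖AS v x‖^2 + 1/2 * ‖D i w x‖^2) := by
      apply integral_mono (integrable_B _ _).neg
        (((integrable_sq _).const_mul _).add ((integrable_sq _).const_mul _))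
      intro x
      simp only [Pi.add_apply, Pi.neg_apply]
      have h1 : -B (AS v x) (D i w x) ≤ ‖AS v x‖ * ‖D i w x‖ := neg_B_le _ _
      nlinarith [sq_nonneg (‖AS v x‖ - ‖D i w x‖)]
    rw [integral_neg] at this
    exact this
  have hsp : ∫ x : E2, (1/2 * ‖AS v x‖^2 + 1/2 * ‖D i w x‖^2)
      = (∫ x : E2, 1/2 * ‖AS v x‖^2) + ∫ x : E2, 1/2 * ‖D i w x‖^2 :=
    integral_add ((integrable_sq _).const_mul _) ((integrable_sq _).const_mul _)
  -- ∫‖Dᵢw‖² ≤ Q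
  have hDiw : ∫ x : E2, ‖D i w x‖^2 ≤ ∫ x : E2, B (AS w x) (w x) := sq_D_le w i
  have hL2 := L2_le v
  rw [hsp, integral_const_mul, integral_const_mul] at hb1
  linarith

/-- transfer to the statement's definitions : `pd` agrees with `D`. -/
lemma pd_eq (i : Fin 2) (v : S2) : pd i (⇑v) = ⇑(D i v) :=
  funext fun x => (D_apply i v x).symm

lemma pd_pd (j i : Fin 2) (v : S2) : pd j (pd i (⇑v)) = ⇑(D j (D i v)) := by
  rw [pd_eq i v]; exact pd_eq j (D i v)

lemma Aop_eq (v : S2) (x : E2) : Aop (⇑v) x = AS v x := by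
  rw [Aop, lap, AS_apply]
  have h0 : pd 0 (pd 0 (⇑v)) x = D 0 (D 0 v) x := by rw [pd_pd]
  have h1 : pd 1 (pd 1 (⇑v)) x = D 1 (D 1 v) x := by rw [pd_pd]
  rw [Fin.sum_univ_two, h0, h1]
  have hmsq : ((‖x‖ : ℂ))^2 = msq x := by rw [msq]; push_cast; ring
  rw [hmsq]
  ring

end HOProof

/-- `⟨A ∂_{x_i} v, ∂_{x_i} v⟩ = ‖∇(∂_{x_i}v)‖² + ‖|x| ∂_{x_i}v‖² ≤ C ‖Av‖²_{L²}`
for Schwartz functions. -/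
theorem derivative_quadratic_form_bound :
    ∃ C : ℝ, 0 < C ∧ ∀ (v : SchwartzMap E2 ℂ) (i : Fin 2),
      (∫ x : E2, gradSq (pd i (fun y => v y)) x)
          + (∫ x : E2, ‖x‖^2 * ‖pd i (fun y => v y) x‖^2)
        ≤ C * ∫ x : E2, ‖Aop (fun y => v y) x‖^2 := by
  refine ⟨3, by norm_num, fun v i => ?_⟩
  have e1 : (fun x : E2 => gradSq (pd i (fun y => v y)) x)
      = fun x => ‖HOProof.D 0 (HOProof.D i v) x‖^2 + ‖HOProof.D 1 (HOProof.D i v) x‖^2 := by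
    funext x
    rw [gradSq, Fin.sum_univ_two]
    rw [HOProof.pd_pd 0 i v, HOProof.pd_pd 1 i v]
  have e2 : (fun x : E2 => ‖x‖^2 * ‖pd i (fun y => v y) x‖^2)
      = fun x => ‖x‖^2 * ‖HOProof.D i v x‖^2 := by
    funext x
    rw [HOProof.pd_eq i v]
  have e3 : (fun x : E2 => ‖Aop (fun y => v y) x‖^2)
      = fun x => ‖HOProof.AS v x‖^2 := by
    funext x
    rw [HOProof.Aop_eq v x]
  rw [e1, e2, e3]
  have hadd : ∫ x : E2, (‖HOProof.D 0 (HOProof.D i v) x‖^2 + ‖HOProof.D 1 (HOProof.D i v) x‖^2)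
      = (∫ x : E2, ‖HOProof.D 0 (HOProof.D i v) x‖^2)
        + ∫ x : E2, ‖HOProof.D 1 (HOProof.D i v) x‖^2 :=
    integral_add (HOProof.integrable_sq _) (HOProof.integrable_sq _)
  rw [hadd]
  have hq := HOProof.qform (HOProof.D i v)
  have hmain := HOProof.main_est v i
  linarith
end
end
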